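/- Let K be a compact subset of ℝ^m, let μ be a Borel probability measure supported on K, and let γ : ℝ → ℝ be L-Lipschitz for some L ≥ 0. Let W be a real m×h matrix, A a real m×h matrix (the CUR approximation C U R of W), and W₂ ∈ ℝ^h. Define f_W(x) = γ(xW)·W₂ and f_A(x) = γ(xA)·W₂ for row vectors x ∈ ℝ^m, where γ is applied entrywise. Suppose f : K → ℝ is continuous and (i) ∫_K (f(x) − f_W(x))² dμ ≤ ε², (ii) ‖W − A‖₂ ≤ (η_p + η_q) σ_{r+1} for real constants η_p, η_q ≥ 0 and σ_{r+1} ≥ 0, and (iii) σ_{r+1} ≤ δ / (L (η_p + η_q) ‖W₂‖₂ ‖K‖₂), where ‖K‖₂ = sup_{x∈K} ‖x‖₂ and δ ≥ 0. Then ∫_K (f(x) − f_A(x))² dμ ≤ (ε + δ)². -/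

import Mathlib

open Matrix MeasureTheory

/-- The Euclidean (ℓ²) norm of a real vector. -/
noncomputable def euclNorm {n : ℕ} (v : Fin n → ℝ) : ℝ :=
  Real.sqrt (∑ i, (v i) ^ 2)

/-- The spectral norm of a real matrix: the operator norm of the induced linear
map between Euclidean spaces. -/
noncomputable def specNorm {a b : ℕ} (A : Matrix (Fin a) (Fin b) ℝ) : ℝ :=
  ‖LinearMap.toContinuousLinearMap (Matrix.toEuclideanLin A)‖

/-- The one-hidden-layer network output `f_W(x) = γ(xW)·W₂` for a row vector
`x ∈ ℝ^m`, with `γ : ℝ → ℝ` applied entrywise. -/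
noncomputable def netOut {m h : ℕ} (γ : ℝ → ℝ) (W : Matrix (Fin m) (Fin h) ℝ)
    (W₂ : Fin h → ℝ) (x : Fin m → ℝ) : ℝ :=
  (fun j => γ (Matrix.vecMul x W j)) ⬝ᵥ W₂

open scoped Matrix.Norms.L2Operator

lemma euclNorm_eq_norm {n : ℕ} (v : Fin n → ℝ) :
    euclNorm v = ‖(EuclideanSpace.equiv (Fin n) ℝ).symm v‖ := by
  rw [EuclideanSpace.norm_eq]
  simp [euclNorm, Real.norm_eq_abs, sq_abs]

lemma euclNorm_nonneg {n : ℕ} (v : Fin n → ℝ) : 0 ≤ euclNorm v :=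
  Real.sqrt_nonneg _

lemma specNorm_eq {a b : ℕ} (A : Matrix (Fin a) (Fin b) ℝ) : specNorm A = ‖A‖ := rfl

lemma specNorm_nonneg {a b : ℕ} (A : Matrix (Fin a) (Fin b) ℝ) : 0 ≤ specNorm A := by
  rw [specNorm_eq]; exact norm_nonneg _

lemma euclNorm_vecMul_le {m h : ℕ} (M : Matrix (Fin m) (Fin h) ℝ) (x : Fin m → ℝ) :
    euclNorm (Matrix.vecMul x M) ≤ specNorm M * euclNorm x := by
  have ht : ‖Mᵀ‖ = ‖M‖ := by
    have : Mᵀ = Mᴴ := by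
      ext i j; simp [Matrix.conjTranspose_apply, Matrix.transpose_apply]
    rw [this, Matrix.l2_opNorm_conjTranspose]
  calc euclNorm (Matrix.vecMul x M)
      = ‖(EuclideanSpace.equiv (Fin h) ℝ).symm
          (Mᵀ *ᵥ ((EuclideanSpace.equiv (Fin m) ℝ).symm x))‖ := by
        rw [euclNorm_eq_norm]
        congr 1
        simp [Matrix.mulVec_transpose]
    _ ≤ ‖Mᵀ‖ * ‖(EuclideanSpace.equiv (Fin m) ℝ).symm x‖ :=
        Matrix.l2_opNorm_mulVec Mᵀ _
    _ = specNorm M * euclNorm x := by rw [ht, specNorm_eq, euclNorm_eq_norm]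

lemma netOut_diff_le {m h : ℕ} (γ : ℝ → ℝ) (L : ℝ) (hL : 0 ≤ L)
    (hγ : ∀ a b : ℝ, |γ a - γ b| ≤ L * |a - b|)
    (W A : Matrix (Fin m) (Fin h) ℝ) (W₂ : Fin h → ℝ) (x : Fin m → ℝ) :
    |netOut γ W W₂ x - netOut γ A W₂ x| ≤
      L * specNorm (W - A) * euclNorm W₂ * euclNorm x := by
  set u := Matrix.vecMul x W with hu
  set v := Matrix.vecMul x A with hv
  have hdiff : netOut γ W W₂ x - netOut γ A W₂ x
      = ∑ j, (γ (u j) - γ (v j)) * W₂ j := by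
    simp [netOut, dotProduct, sub_mul, Finset.sum_sub_distrib]
    rfl
  have cs : |∑ j, (γ (u j) - γ (v j)) * W₂ j| ≤
      Real.sqrt (∑ j, (γ (u j) - γ (v j)) ^ 2) * euclNorm W₂ := by
    calc |∑ j, (γ (u j) - γ (v j)) * W₂ j|
        ≤ ∑ j, |(γ (u j) - γ (v j)) * W₂ j| := Finset.abs_sum_le_sum_abs _ _
      _ = ∑ j, |γ (u j) - γ (v j)| * |W₂ j| := by simp [abs_mul]
      _ ≤ Real.sqrt (∑ j, |γ (u j) - γ (v j)| ^ 2) * Real.sqrt (∑ j, |W₂ j| ^ 2) :=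
          Real.sum_mul_le_sqrt_mul_sqrt _ _ _
      _ = Real.sqrt (∑ j, (γ (u j) - γ (v j)) ^ 2) * euclNorm W₂ := by
          simp [euclNorm, sq_abs]
  have lip : Real.sqrt (∑ j, (γ (u j) - γ (v j)) ^ 2) ≤
      L * euclNorm (fun j => u j - v j) := by
    have hsum : (∑ j, (γ (u j) - γ (v j)) ^ 2) ≤ L ^ 2 * ∑ j, (u j - v j) ^ 2 := by
      rw [Finset.mul_sum]
      refine Finset.sum_le_sum fun j _ => ?_
      have := hγ (u j) (v j)
      calc (γ (u j) - γ (v j)) ^ 2 = |γ (u j) - γ (v j)| ^ 2 := (sq_abs _).symm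
        _ ≤ (L * |u j - v j|) ^ 2 := by
            apply pow_le_pow_left₀ (abs_nonneg _) this
        _ = L ^ 2 * (u j - v j) ^ 2 := by rw [mul_pow, sq_abs]
    calc Real.sqrt (∑ j, (γ (u j) - γ (v j)) ^ 2)
        ≤ Real.sqrt (L ^ 2 * ∑ j, (u j - v j) ^ 2) := Real.sqrt_le_sqrt hsum
      _ = L * euclNorm (fun j => u j - v j) := by
          rw [Real.sqrt_mul (sq_nonneg L), Real.sqrt_sq hL]; rfl
  have hsub : (fun j => u j - v j) = Matrix.vecMul x (W - A) := by
    funext j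
    simp [hu, hv, Matrix.vecMul, dotProduct, mul_sub, Finset.sum_sub_distrib]
  have hop : euclNorm (fun j => u j - v j) ≤ specNorm (W - A) * euclNorm x := by
    rw [hsub]; exact euclNorm_vecMul_le _ _
  calc |netOut γ W W₂ x - netOut γ A W₂ x|
      ≤ Real.sqrt (∑ j, (γ (u j) - γ (v j)) ^ 2) * euclNorm W₂ := by rw [hdiff]; exact cs
    _ ≤ (L * (specNorm (W - A) * euclNorm x)) * euclNorm W₂ := by
        refine mul_le_mul_of_nonneg_right (lip.trans ?_) (euclNorm_nonneg _)
        exact mul_le_mul_of_nonneg_left hop hL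
    _ = L * specNorm (W - A) * euclNorm W₂ * euclNorm x := by ring

lemma integrable_of_ae_bound {α : Type*} [MeasurableSpace α] {ν : Measure α}
    [IsFiniteMeasure ν] {F : α → ℝ} (hm : AEStronglyMeasurable F ν) {C : ℝ}
    (hb : ∀ᵐ x ∂ν, ‖F x‖ ≤ C) : Integrable F ν :=
  memLp_one_iff_integrable.mp (MemLp.of_bound hm C hb)

/-- Let `K ⊆ ℝ^m` be compact, `μ` a Borel probability measure supported on `K`,
and `γ : ℝ → ℝ` `L`-Lipschitz with `L ≥ 0`.  Let `W`, `A` be real `m×h`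
matrices (with `A` the CUR approximation `C U R` of `W`) and `W₂ ∈ ℝ^h`, and
set `f_W(x) = γ(xW)·W₂`, `f_A(x) = γ(xA)·W₂`.  Suppose `f : K → ℝ` is
continuous and
(i) `∫_K (f(x) − f_W(x))² dμ ≤ ε²`,
(ii) `‖W − A‖₂ ≤ (η_p + η_q)·σ_{r+1}` with `η_p, η_q ≥ 0`, `σ_{r+1} ≥ 0`, and
(iii) `σ_{r+1} ≤ δ / (L·(η_p + η_q)·‖W₂‖₂·‖K‖₂)` with `δ ≥ 0`,
where `‖K‖₂ = sup_{x∈K} ‖x‖₂.  Then `∫_K (f(x) − f_A(x))² dμ ≤ (ε + δ)²`. -/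
theorem cur_network_approximation_bound {m h : ℕ}
    (K : Set (Fin m → ℝ)) (hK : IsCompact K)
    (μ : Measure (Fin m → ℝ)) [IsProbabilityMeasure μ] (hμK : μ Kᶜ = 0)
    (γ : ℝ → ℝ) (L : ℝ) (hL : 0 ≤ L)
    (hγ : ∀ a b : ℝ, |γ a - γ b| ≤ L * |a - b|)
    (W A : Matrix (Fin m) (Fin h) ℝ) (W₂ : Fin h → ℝ)
    (f : (Fin m → ℝ) → ℝ) (hf : ContinuousOn f K)
    (ε δ ηp ηq σ : ℝ) (hε : 0 ≤ ε) (hδ : 0 ≤ δ)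
    (hηp : 0 ≤ ηp) (hηq : 0 ≤ ηq) (hσ : 0 ≤ σ)
    (h1 : ∫ x in K, (f x - netOut γ W W₂ x) ^ 2 ∂μ ≤ ε ^ 2)
    (h2 : specNorm (W - A) ≤ (ηp + ηq) * σ)
    (h3 : σ ≤ δ / (L * (ηp + ηq) * euclNorm W₂ * sSup (euclNorm '' K))) :
    ∫ x in K, (f x - netOut γ A W₂ x) ^ 2 ∂μ ≤ (ε + δ) ^ 2 := by
  classical
  set S := sSup (euclNorm '' K) with hS
  -- continuity facts
  have hγc : Continuous γ := by
    have : LipschitzWith (Real.toNNReal L) γ := by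
      apply LipschitzWith.of_dist_le_mul
      intro a b
      rw [Real.dist_eq, Real.dist_eq, Real.coe_toNNReal L hL]
      exact hγ a b
    exact this.continuous
  have hnet : ∀ (M : Matrix (Fin m) (Fin h) ℝ), Continuous (netOut γ M W₂) := by
    intro M
    unfold netOut dotProduct
    apply continuous_finset_sum
    intro j _
    refine Continuous.mul ?_ continuous_const
    refine hγc.comp ?_
    have : (fun x : Fin m → ℝ => Matrix.vecMul x M j) =
        fun x => ∑ i, x i * M i j := rfl
    rw [this]
    exact continuous_finset_sum _ fun i _ => (continuous_apply i).mul continuous_const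
  -- euclNorm is continuous, so S bounds euclNorm on K
  have heuclc : Continuous (euclNorm (n := m)) := by
    unfold euclNorm
    exact Real.continuous_sqrt.comp
      (continuous_finset_sum _ fun i _ => (continuous_apply i).pow 2)
  have hbdd : BddAbove (euclNorm '' K) := (hK.image heuclc).bddAbove
  have hxS : ∀ x ∈ K, euclNorm x ≤ S := fun x hx =>
    le_csSup hbdd (Set.mem_image_of_mem _ hx)
  -- key pointwise bound on K
  have key : ∀ x ∈ K, |netOut γ W W₂ x - netOut γ A W₂ x| ≤ δ := by
    intro x hx
    have hSnn : 0 ≤ S := (euclNorm_nonneg x).trans (hxS x hx)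
    have base := netOut_diff_le γ L hL hγ W A W₂ x
    set D := L * (ηp + ηq) * euclNorm W₂ * S with hD
    have hDnn : 0 ≤ D := by
      have := euclNorm_nonneg W₂
      positivity
    rcases eq_or_lt_of_le hDnn with hD0 | hDpos
    · -- D = 0 : then σ ≤ δ / 0 = 0, so σ = 0, so specNorm (W - A) = 0
      rw [← hD0, div_zero] at h3
      have hσ0 : σ = 0 := le_antisymm h3 hσ
      have hspec0 : specNorm (W - A) = 0 := by
        have := h2
        rw [hσ0, mul_zero] at this
        exact le_antisymm this (specNorm_nonneg _)
      calc |netOut γ W W₂ x - netOut γ A W₂ x|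
          ≤ L * specNorm (W - A) * euclNorm W₂ * euclNorm x := base
        _ = 0 := by rw [hspec0]; ring
        _ ≤ δ := hδ
    · have step : L * specNorm (W - A) * euclNorm W₂ * euclNorm x ≤ D * σ := by
        have h1' : L * specNorm (W - A) * euclNorm W₂ * euclNorm x ≤
            L * ((ηp + ηq) * σ) * euclNorm W₂ * S := by
          have hW₂ := euclNorm_nonneg W₂
          have hxnn := euclNorm_nonneg x
          have hspec := specNorm_nonneg (W - A)
          have hxs := hxS x hx
          have step1 : L * specNorm (W - A) * euclNorm W₂ * euclNorm x ≤
              L * ((ηp + ηq) * σ) * euclNorm W₂ * euclNorm x :=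
            mul_le_mul_of_nonneg_right
              (mul_le_mul_of_nonneg_right (mul_le_mul_of_nonneg_left h2 hL) hW₂) hxnn
          have step2 : L * ((ηp + ηq) * σ) * euclNorm W₂ * euclNorm x ≤
              L * ((ηp + ηq) * σ) * euclNorm W₂ * S :=
            mul_le_mul_of_nonneg_left hxs
              (mul_nonneg (mul_nonneg hL (mul_nonneg (add_nonneg hηp hηq) hσ)) hW₂)
          exact step1.trans step2
        calc L * specNorm (W - A) * euclNorm W₂ * euclNorm x
            ≤ L * ((ηp + ηq) * σ) * euclNorm W₂ * S := h1'
          _ = D * σ := by rw [hD]; ring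
      have hDσ : D * σ ≤ δ := by
        have := (le_div_iff₀ hDpos).mp h3
        linarith [this]
      exact base.trans (step.trans hDσ)
  -- measure-theoretic setup
  set ν := μ.restrict K with hν
  haveI : IsFiniteMeasure ν := by
    rw [hν]
    exact inferInstance
  have hMeasK : MeasurableSet K := hK.isClosed.measurableSet
  set g := fun x => f x - netOut γ W W₂ x with hg
  set q := fun x => netOut γ W W₂ x - netOut γ A W₂ x with hq
  have hgm : AEStronglyMeasurable g ν := by
    exact ((hf.aemeasurable hMeasK).aestronglyMeasurable.sub
      (hnet W).aestronglyMeasurable)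
  have hqm : AEStronglyMeasurable q ν :=
    ((hnet W).sub (hnet A)).aestronglyMeasurable
  -- boundedness of g on K
  obtain ⟨C₁, hC₁⟩ := hK.exists_bound_of_continuousOn hf
  obtain ⟨C₂, hC₂⟩ := hK.exists_bound_of_continuousOn (hnet W).continuousOn
  have hgb : ∀ᵐ x ∂ν, ‖g x‖ ≤ C₁ + C₂ := by
    filter_upwards [ae_restrict_mem hMeasK] with x hx
    calc ‖g x‖ ≤ ‖f x‖ + ‖netOut γ W W₂ x‖ := norm_sub_le _ _
      _ ≤ C₁ + C₂ := add_le_add (hC₁ x hx) (hC₂ x hx)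
  have hqb : ∀ᵐ x ∂ν, ‖q x‖ ≤ δ := by
    filter_upwards [ae_restrict_mem hMeasK] with x hx
    simpa [Real.norm_eq_abs] using key x hx
  have hgmem : MemLp g 2 ν := MemLp.of_bound hgm _ hgb
  have hqmem : MemLp q 2 ν := MemLp.of_bound hqm _ hqb
  have hIg2 : Integrable (fun x => g x ^ 2) ν := hgmem.integrable_sq
  have hIq2 : Integrable (fun x => q x ^ 2) ν := hqmem.integrable_sq
  have hIgq : Integrable (fun x => g x * q x) ν := by
    apply integrable_of_ae_bound (hgm.mul hqm) (C := (C₁ + C₂) * δ)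
    filter_upwards [hgb, hqb] with x hx1 hx2
    show ‖g x * q x‖ ≤ (C₁ + C₂) * δ
    rw [norm_mul]
    exact mul_le_mul hx1 hx2 (norm_nonneg _) ((norm_nonneg _).trans hx1)
  -- ∫ q² ≤ δ²
  have hq2 : ∫ x, q x ^ 2 ∂ν ≤ δ ^ 2 := by
    have : ∫ x, q x ^ 2 ∂ν ≤ ∫ _, δ ^ 2 ∂ν := by
      apply integral_mono_ae hIq2 (integrable_const _)
      filter_upwards [hqb] with x hx
      calc q x ^ 2 = ‖q x‖ ^ 2 := by rw [Real.norm_eq_abs, sq_abs]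
        _ ≤ δ ^ 2 := pow_le_pow_left₀ (norm_nonneg _) hx 2
    refine this.trans ?_
    rw [integral_const, smul_eq_mul]
    have hle : (ν Set.univ).toReal ≤ 1 := by
      have : ν Set.univ ≤ μ Set.univ := by
        rw [hν]
        exact (Measure.restrict_apply_le _ _).trans (measure_mono (Set.subset_univ _))
      have h2 : ν Set.univ ≤ 1 := by simpa using this
      exact ENNReal.toReal_le_of_le_ofReal one_pos.le (by simpa using h2)
    rw [measureReal_def]
    nlinarith [ENNReal.toReal_nonneg (a := ν Set.univ), sq_nonneg δ]
  -- ∫ g² ≤ ε² (this is h1 restated)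
  have hg2 : ∫ x, g x ^ 2 ∂ν ≤ ε ^ 2 := h1
  have hg2nn : 0 ≤ ∫ x, g x ^ 2 ∂ν := integral_nonneg fun x => sq_nonneg _
  have hq2nn : 0 ≤ ∫ x, q x ^ 2 ∂ν := integral_nonneg fun x => sq_nonneg _
  -- Cauchy–Schwarz: ∫ g q ≤ ε δ
  have hconj : Real.HolderConjugate 2 2 := Real.HolderConjugate.two_two
  have h2ofReal : (ENNReal.ofReal (2 : ℝ)) = 2 := by
    simp [ENNReal.ofReal_ofNat]
  have hcs := integral_mul_norm_le_Lp_mul_Lq (μ := ν) hconj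
    (f := g) (g := q) (by rw [h2ofReal]; exact hgmem) (by rw [h2ofReal]; exact hqmem)
  have hnorm2g : ∫ x, ‖g x‖ ^ (2 : ℝ) ∂ν = ∫ x, g x ^ 2 ∂ν := by
    apply integral_congr_ae
    filter_upwards with x
    rw [Real.rpow_two, Real.norm_eq_abs, sq_abs]
  have hnorm2q : ∫ x, ‖q x‖ ^ (2 : ℝ) ∂ν = ∫ x, q x ^ 2 ∂ν := by
    apply integral_congr_ae
    filter_upwards with x
    rw [Real.rpow_two, Real.norm_eq_abs, sq_abs]
  have hrootg : (∫ x, ‖g x‖ ^ (2 : ℝ) ∂ν) ^ ((1 : ℝ) / 2) ≤ ε := by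
    rw [hnorm2g]
    calc (∫ x, g x ^ 2 ∂ν) ^ ((1 : ℝ) / 2) ≤ (ε ^ 2) ^ ((1 : ℝ) / 2) :=
        Real.rpow_le_rpow hg2nn hg2 (by norm_num)
      _ = ε := by
          rw [← Real.rpow_two, ← Real.rpow_mul hε]
          norm_num
  have hrootq : (∫ x, ‖q x‖ ^ (2 : ℝ) ∂ν) ^ ((1 : ℝ) / 2) ≤ δ := by
    rw [hnorm2q]
    calc (∫ x, q x ^ 2 ∂ν) ^ ((1 : ℝ) / 2) ≤ (δ ^ 2) ^ ((1 : ℝ) / 2) :=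
        Real.rpow_le_rpow hq2nn hq2 (by norm_num)
      _ = δ := by
          rw [← Real.rpow_two, ← Real.rpow_mul hδ]
          norm_num
  have hcross : ∫ x, g x * q x ∂ν ≤ ε * δ := by
    have habs : ∫ x, g x * q x ∂ν ≤ ∫ x, ‖g x‖ * ‖q x‖ ∂ν := by
      apply integral_mono_ae hIgq
      · apply integrable_of_ae_bound ((hgm.norm).mul (hqm.norm)) (C := (C₁ + C₂) * δ)
        filter_upwards [hgb, hqb] with x hx1 hx2
        show ‖‖g x‖ * ‖q x‖‖ ≤ (C₁ + C₂) * δ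
        rw [Real.norm_eq_abs, abs_mul, abs_of_nonneg (norm_nonneg _),
          abs_of_nonneg (norm_nonneg _)]
        exact mul_le_mul hx1 hx2 (norm_nonneg _) ((norm_nonneg _).trans hx1)
      · filter_upwards with x
        calc g x * q x ≤ |g x * q x| := le_abs_self _
          _ = ‖g x‖ * ‖q x‖ := by rw [abs_mul, Real.norm_eq_abs, Real.norm_eq_abs]
    refine habs.trans (hcs.trans ?_)
    have h1nn : (0:ℝ) ≤ (∫ x, ‖g x‖ ^ (2 : ℝ) ∂ν) ^ ((1 : ℝ) / 2) :=
      Real.rpow_nonneg (by rw [hnorm2g]; exact hg2nn) _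
    exact mul_le_mul hrootg hrootq (Real.rpow_nonneg (by rw [hnorm2q]; exact hq2nn) _) hε
  -- putting everything together
  have hexpand : ∫ x in K, (f x - netOut γ A W₂ x) ^ 2 ∂μ =
      (∫ x, g x ^ 2 ∂ν) + 2 * (∫ x, g x * q x ∂ν) + (∫ x, q x ^ 2 ∂ν) := by
    have heq : ∀ x, (f x - netOut γ A W₂ x) ^ 2 =
        g x ^ 2 + 2 * (g x * q x) + q x ^ 2 := by
      intro x; simp only [hg, hq]; ring
    calc ∫ x in K, (f x - netOut γ A W₂ x) ^ 2 ∂μ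
        = ∫ x, (g x ^ 2 + 2 * (g x * q x) + q x ^ 2) ∂ν := by
          apply integral_congr_ae
          filter_upwards with x
          exact heq x
      _ = (∫ x, g x ^ 2 ∂ν) + 2 * (∫ x, g x * q x ∂ν) + (∫ x, q x ^ 2 ∂ν) := by
          have hA : Integrable (fun x => g x ^ 2 + 2 * (g x * q x)) ν :=
            hIg2.add (hIgq.const_mul 2)
          have hB : Integrable (fun x => 2 * (g x * q x)) ν := hIgq.const_mul 2
          rw [integral_add hA hIq2, integral_add hIg2 hB, MeasureTheory.integral_const_mul]
  rw [hexpand]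
  nlinarith [hg2, hq2, hcross]
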